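/- Let g ∈ L¹(ℂ, ν) where dν(z) = (2π)^{-1} e^{-|z|²/2} dz, and define (Tf)(z) = ∫_ℂ f(w) g(z−w) e^{z w̄} dμ(w) for f ∈ L²(ℂ, μ), where dμ(z) = π^{-1}e^{-|z|²}dz. Then T is a bounded linear operator on L²(ℂ, μ) with operator norm ‖T‖ ≤ 2‖g‖_{L¹(ℂ,ν)}. -/

import Mathlib

open Complex MeasureTheory
open scoped ENNReal NNReal

/-- The Gaussian measure dμ(z) = π⁻¹ e^{-|z|²} dz on ℂ. -/
noncomputable def gaussMeasure : Measure ℂ :=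
  volume.withDensity fun z => ENNReal.ofReal (Real.exp (-‖z‖ ^ 2) / Real.pi)

/-- The Gaussian measure dν(z) = (2π)⁻¹ e^{-|z|²/2} dz on ℂ. -/
noncomputable def gaussMeasureHalf : Measure ℂ :=
  volume.withDensity fun z => ENNReal.ofReal (Real.exp (-‖z‖ ^ 2 / 2) / (2 * Real.pi))

private lemma rpow_half_sq (x : ℝ≥0∞) : (x ^ (1/2 : ℝ)) ^ (2:ℝ) = x := by
  rw [← ENNReal.rpow_mul]; norm_num

private lemma sq_rpow_half (x : ℝ≥0∞) : (x ^ (2 : ℝ)) ^ (1/2:ℝ) = x := by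
  rw [← ENNReal.rpow_mul]; norm_num

private lemma young_aux {F G : ℂ → ℝ≥0∞} (hF : Measurable F) (hG : Measurable G) :
    ∫⁻ z, (∫⁻ w, F w * G (z - w)) ^ (2:ℝ)
      ≤ (∫⁻ u, G u) ^ (2:ℝ) * ∫⁻ w, (F w) ^ (2:ℝ) := by
  set IG := ∫⁻ u, G u with hIG
  have hconj : Real.HolderConjugate 2 2 := Real.HolderConjugate.two_two
  have hGz : ∀ z : ℂ, ∫⁻ w, G (z - w) = IG := fun z =>
    (Measure.measurePreserving_sub_left volume z).lintegral_comp hG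
  have hGw : ∀ w : ℂ, ∫⁻ z, G (z - w) = IG := fun w =>
    lintegral_sub_right_eq_self G w
  have hGm : ∀ z : ℂ, Measurable fun w : ℂ => G (z - w) := fun z =>
    hG.comp (measurable_const.sub measurable_id)
  have hGm' : ∀ w : ℂ, Measurable fun z : ℂ => G (z - w) := fun w =>
    hG.comp (measurable_id.sub measurable_const)
  have step1 : ∀ z : ℂ, (∫⁻ w, F w * G (z - w)) ^ (2:ℝ)
      ≤ IG * ∫⁻ w, F w ^ (2:ℝ) * G (z - w) := by
    intro z
    have m1 : Measurable fun w : ℂ => F w * (G (z - w)) ^ (1/2:ℝ) :=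
      hF.mul ((hGm z).pow_const _)
    have m2 : Measurable fun w : ℂ => (G (z - w)) ^ (1/2:ℝ) := (hGm z).pow_const _
    have hCS := ENNReal.lintegral_mul_le_Lp_mul_Lq volume hconj m1.aemeasurable m2.aemeasurable
    have e1 : ∀ w : ℂ, (F w * (G (z - w)) ^ (1/2:ℝ)) * (G (z - w)) ^ (1/2:ℝ)
        = F w * G (z - w) := by
      intro w
      rw [mul_assoc, ← ENNReal.rpow_add_of_nonneg _ _ (by norm_num) (by norm_num)]
      norm_num
    have e2 : ∀ w : ℂ, ((F w * (G (z - w)) ^ (1/2:ℝ))) ^ (2:ℝ)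
        = F w ^ (2:ℝ) * G (z - w) := by
      intro w
      rw [ENNReal.mul_rpow_of_nonneg _ _ (by norm_num), rpow_half_sq]
    simp only [Pi.mul_apply, e1, e2, rpow_half_sq] at hCS
    rw [hGz z] at hCS
    calc (∫⁻ w, F w * G (z - w)) ^ (2:ℝ)
        ≤ ((∫⁻ w, F w ^ (2:ℝ) * G (z - w)) ^ (1/2:ℝ) * IG ^ (1/2:ℝ)) ^ (2:ℝ) :=
          ENNReal.rpow_le_rpow hCS (by norm_num)
      _ = (∫⁻ w, F w ^ (2:ℝ) * G (z - w)) * IG := by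
          rw [ENNReal.mul_rpow_of_nonneg _ _ (by norm_num), rpow_half_sq, rpow_half_sq]
      _ = IG * ∫⁻ w, F w ^ (2:ℝ) * G (z - w) := mul_comm _ _
  have mprod : Measurable fun p : ℂ × ℂ => F p.2 ^ (2:ℝ) * G (p.1 - p.2) :=
    ((hF.comp measurable_snd).pow_const _).mul (hG.comp (measurable_fst.sub measurable_snd))
  calc ∫⁻ z, (∫⁻ w, F w * G (z - w)) ^ (2:ℝ)
      ≤ ∫⁻ z, IG * ∫⁻ w, F w ^ (2:ℝ) * G (z - w) := lintegral_mono step1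
    _ = IG * ∫⁻ z, ∫⁻ w, F w ^ (2:ℝ) * G (z - w) :=
        lintegral_const_mul _ mprod.lintegral_prod_right'
    _ = IG * ∫⁻ w, ∫⁻ z, F w ^ (2:ℝ) * G (z - w) := by
        rw [lintegral_lintegral_swap mprod.aemeasurable]
    _ = IG * ∫⁻ w, F w ^ (2:ℝ) * IG := by
        congr 1; refine lintegral_congr fun w => ?_
        rw [lintegral_const_mul _ (hGm' w), hGw w]
    _ = (IG) ^ (2:ℝ) * ∫⁻ w, (F w) ^ (2:ℝ) := by
        rw [lintegral_mul_const _ (hF.pow_const _),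
          show (2:ℝ) = ((2:ℕ):ℝ) by norm_num, ENNReal.rpow_natCast]
        ring

private lemma exp_key (z w : ℂ) :
    Real.exp (-‖w‖ ^ 2) * Real.exp ((z * (starRingEnd ℂ) w).re) * Real.exp (-‖z‖ ^ 2 / 2)
      = Real.exp (-‖w‖ ^ 2 / 2) * Real.exp (-‖z - w‖ ^ 2 / 2) := by
  rw [← Real.exp_add, ← Real.exp_add, ← Real.exp_add]
  congr 1
  have h : ∀ u : ℂ, ‖u‖ ^ 2 = Complex.normSq u := fun u => by
    rw [Complex.sq_norm]
  have h2 := Complex.normSq_sub z w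
  rw [h, h, h, h2]
  ring

private lemma rho_meas : Measurable fun z : ℂ => ENNReal.ofReal (Real.exp (-‖z‖ ^ 2) / Real.pi) :=
  (ENNReal.continuous_ofReal.comp <| ((Real.continuous_exp.comp
    (continuous_norm.pow 2).neg).div_const _)).measurable

private lemma sigma_meas :
    Measurable fun z : ℂ => ENNReal.ofReal (Real.exp (-‖z‖ ^ 2 / 2) / (2 * Real.pi)) :=
  (ENNReal.continuous_ofReal.comp <| ((Real.continuous_exp.comp
    ((continuous_norm.pow 2).neg.div_const _)).div_const _)).measurable

private lemma E_meas : Measurable fun u : ℂ => ENNReal.ofReal (Real.exp (-‖u‖ ^ 2 / 2)) :=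
  (ENNReal.continuous_ofReal.comp ((Real.continuous_exp.comp
    ((continuous_norm.pow 2).neg.div_const _)))).measurable

private lemma key_bound {f g : ℂ → ℂ} (hf : Measurable f) (hg : Measurable g) (z : ℂ) :
    (‖∫ w, f w * g (z - w) * Complex.exp (z * (starRingEnd ℂ) w) ∂gaussMeasure‖₊ : ℝ≥0∞)
        * ENNReal.ofReal (Real.exp (-‖z‖ ^ 2 / 2))
      ≤ (ENNReal.ofReal Real.pi)⁻¹ *
        ∫⁻ w, ((‖f w‖₊ : ℝ≥0∞) * ENNReal.ofReal (Real.exp (-‖w‖ ^ 2 / 2))) *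
          ((‖g (z - w)‖₊ : ℝ≥0∞) * ENNReal.ofReal (Real.exp (-‖z - w‖ ^ 2 / 2))) := by
  have hmeas : Measurable fun w : ℂ =>
      (‖f w * g (z - w) * Complex.exp (z * (starRingEnd ℂ) w)‖₊ : ℝ≥0∞) := by
    apply Measurable.coe_nnreal_ennreal
    apply Measurable.nnnorm
    exact (hf.mul (hg.comp (measurable_const.sub measurable_id))).mul
      ((Complex.measurable_exp).comp (measurable_const.mul
        (Complex.continuous_conj.measurable)))
  have step1 : (‖∫ w, f w * g (z - w) * Complex.exp (z * (starRingEnd ℂ) w) ∂gaussMeasure‖₊ : ℝ≥0∞)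
      ≤ ∫⁻ w, (‖f w * g (z - w) * Complex.exp (z * (starRingEnd ℂ) w)‖₊ : ℝ≥0∞) ∂gaussMeasure :=
    enorm_integral_le_lintegral_enorm _
  have step2 : (∫⁻ w, (‖f w * g (z - w) * Complex.exp (z * (starRingEnd ℂ) w)‖₊ : ℝ≥0∞) ∂gaussMeasure)
      = ∫⁻ w, ENNReal.ofReal (Real.exp (-‖w‖ ^ 2) / Real.pi)
          * (‖f w * g (z - w) * Complex.exp (z * (starRingEnd ℂ) w)‖₊ : ℝ≥0∞) := by
    rw [gaussMeasure, lintegral_withDensity_eq_lintegral_mul _ rho_meas hmeas]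
    rfl
  calc (‖∫ w, f w * g (z - w) * Complex.exp (z * (starRingEnd ℂ) w) ∂gaussMeasure‖₊ : ℝ≥0∞)
        * ENNReal.ofReal (Real.exp (-‖z‖ ^ 2 / 2))
      ≤ (∫⁻ w, ENNReal.ofReal (Real.exp (-‖w‖ ^ 2) / Real.pi)
          * (‖f w * g (z - w) * Complex.exp (z * (starRingEnd ℂ) w)‖₊ : ℝ≥0∞))
          * ENNReal.ofReal (Real.exp (-‖z‖ ^ 2 / 2)) := by
        exact mul_le_mul_left (step2 ▸ step1) _
    _ = ∫⁻ w, (ENNReal.ofReal (Real.exp (-‖w‖ ^ 2) / Real.pi)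
          * (‖f w * g (z - w) * Complex.exp (z * (starRingEnd ℂ) w)‖₊ : ℝ≥0∞))
          * ENNReal.ofReal (Real.exp (-‖z‖ ^ 2 / 2)) := by
        rw [lintegral_mul_const' _ _ ENNReal.ofReal_ne_top]
    _ = ∫⁻ w, (ENNReal.ofReal Real.pi)⁻¹ *
          (((‖f w‖₊ : ℝ≥0∞) * ENNReal.ofReal (Real.exp (-‖w‖ ^ 2 / 2))) *
          ((‖g (z - w)‖₊ : ℝ≥0∞) * ENNReal.ofReal (Real.exp (-‖z - w‖ ^ 2 / 2)))) := by
        refine lintegral_congr fun w => ?_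
        rw [← ENNReal.ofReal_inv_of_pos Real.pi_pos]
        rw [← enorm_eq_nnnorm, ← enorm_eq_nnnorm, ← enorm_eq_nnnorm, ← ofReal_norm_eq_enorm,
          ← ofReal_norm_eq_enorm, ← ofReal_norm_eq_enorm]
        rw [← ENNReal.ofReal_mul (by positivity), ← ENNReal.ofReal_mul (by positivity),
          ← ENNReal.ofReal_mul (by positivity), ← ENNReal.ofReal_mul (by positivity),
          ← ENNReal.ofReal_mul (by positivity), ← ENNReal.ofReal_mul (by positivity)]
        congr 1
        have hnorm : ‖f w * g (z - w) * Complex.exp (z * (starRingEnd ℂ) w)‖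
            = ‖f w‖ * ‖g (z - w)‖ * Real.exp ((z * (starRingEnd ℂ) w).re) := by
          rw [norm_mul, norm_mul, Complex.norm_exp]
        rw [hnorm]
        have hk := exp_key z w
        linear_combination (‖f w‖ * ‖g (z - w)‖ / Real.pi) * hk
    _ = (ENNReal.ofReal Real.pi)⁻¹ *
        ∫⁻ w, ((‖f w‖₊ : ℝ≥0∞) * ENNReal.ofReal (Real.exp (-‖w‖ ^ 2 / 2))) *
          ((‖g (z - w)‖₊ : ℝ≥0∞) * ENNReal.ofReal (Real.exp (-‖z - w‖ ^ 2 / 2))) := by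
        exact lintegral_const_mul _
          (((hf.nnnorm.coe_nnreal_ennreal).mul E_meas).mul
            ((((hg.nnnorm.coe_nnreal_ennreal).mul E_meas)).comp
              (measurable_const.sub measurable_id)))

/-- For g ∈ L¹(ℂ, ν), the operator (Tf)(z) = ∫ f(w) g(z−w) e^{z w̄} dμ(w) is a
bounded linear operator on L²(ℂ, μ) with ‖T‖ ≤ 2‖g‖_{L¹(ℂ,ν)}. -/
theorem integral_operator_bounded (g : ℂ → ℂ) (hg : Integrable g gaussMeasureHalf)
    (T : (ℂ → ℂ) → ℂ → ℂ)
    (hT : ∀ f z, T f z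
      = ∫ w, f w * g (z - w) * Complex.exp (z * (starRingEnd ℂ) w) ∂gaussMeasure) :
    ∀ f : ℂ → ℂ, MemLp f 2 gaussMeasure →
      MemLp (T f) 2 gaussMeasure ∧
      eLpNorm (T f) 2 gaussMeasure
        ≤ 2 * ENNReal.ofReal (∫ z, ‖g z‖ ∂gaussMeasureHalf) * eLpNorm f 2 gaussMeasure := by
  intro f hf
  set p : ℝ≥0∞ := ENNReal.ofReal Real.pi with hp
  have hp0 : p ≠ 0 := by
    simp [hp, ENNReal.ofReal_eq_zero, not_le, Real.pi_pos]
  have hpt : p ≠ ∞ := ENNReal.ofReal_ne_top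
  set NG : ℝ≥0∞ := ENNReal.ofReal (∫ z, ‖g z‖ ∂gaussMeasureHalf) with hNG
  -- measurable representatives
  set f' : ℂ → ℂ := hf.1.mk f with hf'def
  have hf'm : StronglyMeasurable f' := hf.1.stronglyMeasurable_mk
  have hff' : f =ᵐ[gaussMeasure] f' := hf.1.ae_eq_mk
  set g' : ℂ → ℂ := hg.1.mk g with hg'def
  have hg'm : StronglyMeasurable g' := hg.1.stronglyMeasurable_mk
  have hgg' : g =ᵐ[gaussMeasureHalf] g' := hg.1.ae_eq_mk
  have hgvol : g =ᵐ[volume] g' := by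
    rw [gaussMeasureHalf] at hgg'
    exact (withDensity_ae_eq sigma_meas.aemeasurable
      (ae_of_all _ fun z => by positivity)).mp hgg'
  -- the primed operator
  set T' : ℂ → ℂ := fun z =>
    ∫ w, f' w * g' (z - w) * Complex.exp (z * (starRingEnd ℂ) w) ∂gaussMeasure with hT'def
  have hmuac : gaussMeasure ≪ volume := withDensity_absolutelyContinuous _ _
  have hTT' : ∀ z : ℂ, T f z = T' z := by
    intro z
    rw [hT f z]
    refine integral_congr_ae ?_
    have h1 : (g ∘ fun w : ℂ => z - w) =ᵐ[volume] (g' ∘ fun w : ℂ => z - w) :=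
      (Measure.measurePreserving_sub_left volume z).quasiMeasurePreserving.ae_eq_comp hgvol
    have hgz : (fun w : ℂ => g (z - w)) =ᵐ[gaussMeasure] fun w => g' (z - w) :=
      hmuac.ae_eq h1
    filter_upwards [hff', hgz] with w e1 e2
    rw [e1, e2]
  -- strong measurability of T'
  have hprodm : StronglyMeasurable fun q : ℂ × ℂ =>
      f' q.2 * g' (q.1 - q.2) * Complex.exp (q.1 * (starRingEnd ℂ) q.2) := by
    apply Measurable.stronglyMeasurable
    exact ((hf'm.measurable.comp measurable_snd).mul
      (hg'm.measurable.comp (measurable_fst.sub measurable_snd))).mul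
      (Complex.measurable_exp.comp (measurable_fst.mul
        (Complex.continuous_conj.measurable.comp measurable_snd)))
  haveI : SFinite gaussMeasure := by rw [gaussMeasure]; infer_instance
  have hT'm : StronglyMeasurable T' := hprodm.integral_prod_right'
  have hTfm : AEStronglyMeasurable (T f) gaussMeasure := by
    rw [show T f = T' from funext hTT']
    exact hT'm.aestronglyMeasurable
  -- Gaussian weight algebra
  have hEsq : ∀ z : ℂ, (ENNReal.ofReal (Real.exp (-‖z‖ ^ 2 / 2))) ^ (2:ℝ)
      = ENNReal.ofReal (Real.exp (-‖z‖ ^ 2)) := by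
    intro z
    rw [show (2:ℝ) = ((2:ℕ):ℝ) by norm_num, ENNReal.rpow_natCast,
      ← ENNReal.ofReal_pow (Real.exp_pos _).le]
    congr 1
    rw [sq, ← Real.exp_add]; congr 1; ring
  have hrho : ∀ z : ℂ, ENNReal.ofReal (Real.exp (-‖z‖ ^ 2) / Real.pi)
      = p⁻¹ * (ENNReal.ofReal (Real.exp (-‖z‖ ^ 2 / 2))) ^ (2:ℝ) := by
    intro z
    rw [hEsq z, div_eq_mul_inv, ENNReal.ofReal_mul (Real.exp_pos _).le,
      ENNReal.ofReal_inv_of_pos Real.pi_pos, mul_comm]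
  -- converting gaussian L² integrals to Lebesgue ones
  have hconv : ∀ h : ℂ → ℂ, Measurable h →
      ∫⁻ z, (‖h z‖₊ : ℝ≥0∞) ^ (2:ℝ) ∂gaussMeasure
        = p⁻¹ * ∫⁻ z, ((‖h z‖₊ : ℝ≥0∞) * ENNReal.ofReal (Real.exp (-‖z‖ ^ 2 / 2))) ^ (2:ℝ) := by
    intro h hm
    rw [gaussMeasure, lintegral_withDensity_eq_lintegral_mul _ rho_meas
      (hm.nnnorm.coe_nnreal_ennreal.pow_const _),
      ← lintegral_const_mul' _ _ (ENNReal.inv_ne_top.2 hp0)]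
    refine lintegral_congr fun z => ?_
    simp only [Pi.mul_apply]
    rw [ENNReal.mul_rpow_of_nonneg _ _ (by norm_num), hrho z]
    ring
  have hFm : Measurable fun w : ℂ =>
      (‖f' w‖₊ : ℝ≥0∞) * ENNReal.ofReal (Real.exp (-‖w‖ ^ 2 / 2)) :=
    hf'm.measurable.nnnorm.coe_nnreal_ennreal.mul E_meas
  have hGmeas : Measurable fun u : ℂ =>
      (‖g' u‖₊ : ℝ≥0∞) * ENNReal.ofReal (Real.exp (-‖u‖ ^ 2 / 2)) :=
    hg'm.measurable.nnnorm.coe_nnreal_ennreal.mul E_meas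
  -- the L¹ норм of G
  have hNGlint : ∫⁻ u, (‖g u‖₊ : ℝ≥0∞) ∂gaussMeasureHalf = NG :=
    (ofReal_integral_norm_eq_lintegral_enorm hg).symm
  have hIG : (∫⁻ u, (‖g' u‖₊ : ℝ≥0∞) * ENNReal.ofReal (Real.exp (-‖u‖ ^ 2 / 2)))
      = 2 * p * NG := by
    have e1 : ∀ u : ℂ, (‖g' u‖₊ : ℝ≥0∞) * ENNReal.ofReal (Real.exp (-‖u‖ ^ 2 / 2))
        = (2 * p) * (ENNReal.ofReal (Real.exp (-‖u‖ ^ 2 / 2) / (2 * Real.pi))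
            * (‖g' u‖₊ : ℝ≥0∞)) := by
      intro u
      have h2 : ENNReal.ofReal (Real.exp (-‖u‖ ^ 2 / 2))
          = ENNReal.ofReal (2 * Real.pi) * ENNReal.ofReal (Real.exp (-‖u‖ ^ 2 / 2) / (2 * Real.pi)) := by
        rw [← ENNReal.ofReal_mul (by positivity)]
        congr 1
        field_simp
      rw [h2, ENNReal.ofReal_mul (by norm_num), ENNReal.ofReal_ofNat]
      ring
    rw [lintegral_congr e1, lintegral_const_mul' _ _ (ENNReal.mul_ne_top (by norm_num) hpt)]
    congr 1
    have hwd := lintegral_withDensity_eq_lintegral_mul volume sigma_meas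
      hg'm.measurable.nnnorm.coe_nnreal_ennreal
    simp only [Pi.mul_apply] at hwd
    rw [← hwd]
    have hmeq : volume.withDensity (fun z : ℂ =>
        ENNReal.ofReal (Real.exp (-‖z‖ ^ 2 / 2) / (2 * Real.pi))) = gaussMeasureHalf := rfl
    rw [hmeq, ← hNGlint]
    exact lintegral_congr_ae (hgg'.symm.mono fun u hu => by simp only []; rw [hu])
  -- core inequality
  have key : ∀ z : ℂ,
      (((‖T' z‖₊ : ℝ≥0∞) * ENNReal.ofReal (Real.exp (-‖z‖ ^ 2 / 2)))) ^ (2:ℝ)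
        ≤ (p⁻¹ * ∫⁻ w, ((‖f' w‖₊ : ℝ≥0∞) * ENNReal.ofReal (Real.exp (-‖w‖ ^ 2 / 2))) *
            ((‖g' (z - w)‖₊ : ℝ≥0∞) * ENNReal.ofReal (Real.exp (-‖z - w‖ ^ 2 / 2)))) ^ (2:ℝ) :=
    fun z => ENNReal.rpow_le_rpow
      (key_bound hf'm.measurable hg'm.measurable z) (by norm_num)
  have hinner : Measurable fun z : ℂ =>
      ∫⁻ w, ((‖f' w‖₊ : ℝ≥0∞) * ENNReal.ofReal (Real.exp (-‖w‖ ^ 2 / 2))) *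
        ((‖g' (z - w)‖₊ : ℝ≥0∞) * ENNReal.ofReal (Real.exp (-‖z - w‖ ^ 2 / 2))) := by
    apply Measurable.lintegral_prod_right'
      (f := fun q : ℂ × ℂ => ((‖f' q.2‖₊ : ℝ≥0∞) * ENNReal.ofReal (Real.exp (-‖q.2‖ ^ 2 / 2))) *
        ((‖g' (q.1 - q.2)‖₊ : ℝ≥0∞) * ENNReal.ofReal (Real.exp (-‖q.1 - q.2‖ ^ 2 / 2))))
    exact (hFm.comp measurable_snd).mul
      (hGmeas.comp (measurable_fst.sub measurable_snd))
  set Sf : ℝ≥0∞ := ∫⁻ z, (‖f' z‖₊ : ℝ≥0∞) ^ (2:ℝ) ∂gaussMeasure with hSf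
  have hIF2 : (∫⁻ w, ((‖f' w‖₊ : ℝ≥0∞) * ENNReal.ofReal (Real.exp (-‖w‖ ^ 2 / 2))) ^ (2:ℝ))
      = p * Sf := by
    rw [hSf, hconv f' hf'm.measurable, ← mul_assoc, ENNReal.mul_inv_cancel hp0 hpt, one_mul]
  have h2n : ∀ x : ℝ≥0∞, x ^ (2:ℝ) = x ^ (2:ℕ) := fun x => by
    rw [show (2:ℝ) = ((2:ℕ):ℝ) by norm_num, ENNReal.rpow_natCast]
  have core : ∫⁻ z, (‖T' z‖₊ : ℝ≥0∞) ^ (2:ℝ) ∂gaussMeasure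
      ≤ (2 * NG) ^ (2:ℝ) * Sf := by
    calc ∫⁻ z, (‖T' z‖₊ : ℝ≥0∞) ^ (2:ℝ) ∂gaussMeasure
        = p⁻¹ * ∫⁻ z, ((‖T' z‖₊ : ℝ≥0∞) * ENNReal.ofReal (Real.exp (-‖z‖ ^ 2 / 2))) ^ (2:ℝ) :=
          hconv T' hT'm.measurable
      _ ≤ p⁻¹ * ∫⁻ z, (p⁻¹ * ∫⁻ w,
            ((‖f' w‖₊ : ℝ≥0∞) * ENNReal.ofReal (Real.exp (-‖w‖ ^ 2 / 2))) *
            ((‖g' (z - w)‖₊ : ℝ≥0∞) * ENNReal.ofReal (Real.exp (-‖z - w‖ ^ 2 / 2)))) ^ (2:ℝ) :=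
          mul_le_mul_right (lintegral_mono fun z => key z) _
      _ = p⁻¹ * ∫⁻ z, p⁻¹ ^ (2:ℝ) * (∫⁻ w,
            ((‖f' w‖₊ : ℝ≥0∞) * ENNReal.ofReal (Real.exp (-‖w‖ ^ 2 / 2))) *
            ((‖g' (z - w)‖₊ : ℝ≥0∞) * ENNReal.ofReal (Real.exp (-‖z - w‖ ^ 2 / 2)))) ^ (2:ℝ) := by
          congr 1
          exact lintegral_congr fun z => ENNReal.mul_rpow_of_nonneg _ _ (by norm_num)
      _ = p⁻¹ * (p⁻¹ ^ (2:ℝ) * ∫⁻ z, (∫⁻ w,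
            ((‖f' w‖₊ : ℝ≥0∞) * ENNReal.ofReal (Real.exp (-‖w‖ ^ 2 / 2))) *
            ((‖g' (z - w)‖₊ : ℝ≥0∞) * ENNReal.ofReal (Real.exp (-‖z - w‖ ^ 2 / 2)))) ^ (2:ℝ)) := by
          rw [lintegral_const_mul _ (hinner.pow_const _)]
      _ ≤ p⁻¹ * (p⁻¹ ^ (2:ℝ) * ((∫⁻ u, (‖g' u‖₊ : ℝ≥0∞) *
            ENNReal.ofReal (Real.exp (-‖u‖ ^ 2 / 2))) ^ (2:ℝ) *
            ∫⁻ w, ((‖f' w‖₊ : ℝ≥0∞) * ENNReal.ofReal (Real.exp (-‖w‖ ^ 2 / 2))) ^ (2:ℝ))) := by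
          gcongr
          exact young_aux hFm hGmeas
      _ = p⁻¹ * (p⁻¹ ^ (2:ℝ) * ((2 * p * NG) ^ (2:ℝ) * (p * Sf))) := by
          rw [hIG, hIF2]
      _ = (2 * NG) ^ (2:ℝ) * Sf := by
          simp only [h2n]
          have hcancel : p⁻¹ * p = 1 := ENNReal.inv_mul_cancel hp0 hpt
          have e : p⁻¹ * (p⁻¹ ^ (2:ℕ) * ((2 * p * NG) ^ (2:ℕ) * (p * Sf)))
              = (p⁻¹ * p) * ((p⁻¹ * p) * ((p⁻¹ * p) * ((2 * NG) ^ (2:ℕ) * Sf))) := by ring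
          rw [e, hcancel, one_mul, one_mul, one_mul]
  -- conclude
  have hsnT : eLpNorm (T f) 2 gaussMeasure
      = (∫⁻ z, (‖T' z‖₊ : ℝ≥0∞) ^ (2:ℝ) ∂gaussMeasure) ^ (1/2:ℝ) := by
    rw [show T f = T' from funext hTT',
      eLpNorm_eq_lintegral_rpow_enorm_toReal two_ne_zero ENNReal.ofNat_ne_top]
    norm_num
    rfl
  have hsnf : eLpNorm f 2 gaussMeasure = Sf ^ (1/2:ℝ) := by
    rw [eLpNorm_congr_ae hff',
      eLpNorm_eq_lintegral_rpow_enorm_toReal two_ne_zero ENNReal.ofNat_ne_top, hSf]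
    norm_num
    rfl
  have hbound : eLpNorm (T f) 2 gaussMeasure ≤ 2 * NG * eLpNorm f 2 gaussMeasure := by
    rw [hsnT, hsnf]
    calc (∫⁻ z, (‖T' z‖₊ : ℝ≥0∞) ^ (2:ℝ) ∂gaussMeasure) ^ (1/2:ℝ)
        ≤ ((2 * NG) ^ (2:ℝ) * Sf) ^ (1/2:ℝ) := ENNReal.rpow_le_rpow core (by norm_num)
      _ = 2 * NG * Sf ^ (1/2:ℝ) := by
          rw [ENNReal.mul_rpow_of_nonneg _ _ (by norm_num), sq_rpow_half]
  refine ⟨⟨hTfm, ?_⟩, hbound⟩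
  refine lt_of_le_of_lt hbound ?_
  exact ENNReal.mul_lt_top
    (ENNReal.mul_lt_top (by norm_num) ENNReal.ofReal_lt_top) hf.2
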